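/- If G is a connected cubic (3-regular) graph on n vertices and J is a set of vertices whose removal leaves an acyclic graph, then |J| ≥ ⌈(n+2)/4⌉. -/

import Mathlib

open SimpleGraph Finset

lemma acyclic_sup_edge {α : Type*} {H : SimpleGraph α} (hH : H.IsAcyclic)
    {u v : α} (hr : ¬H.Reachable u v) : (H ⊔ edge u v).IsAcyclic := by
  have huv : u ≠ v := fun h => hr (h ▸ Reachable.refl u)
  have hadj : ¬H.Adj u v := fun h => hr h.reachable
  have hdel : (H ⊔ edge u v) \ edge u v = H := by
    ext a b
    simp only [sdiff_adj, sup_adj]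
    constructor
    · rintro ⟨h1 | h1, h2⟩
      · exact h1
      · exact absurd h1 h2
    · intro h
      refine ⟨Or.inl h, fun he => ?_⟩
      rw [edge_adj] at he
      rcases he.1 with ⟨rfl, rfl⟩ | ⟨rfl, rfl⟩
      exacts [hadj h, hadj h.symm]
  have hbr : (H ⊔ edge u v).IsBridge s(u, v) := by
    rw [isBridge_iff]
    show ¬ ((H ⊔ edge u v) \ edge u v).Reachable u v
    rw [hdel]
    exact hr
  intro a c hc
  by_cases he : s(u, v) ∈ c.edges
  · exact hbr.notMem_edges_of_isCycle hc he
  · have hsub : ∀ e ∈ c.edges, e ∈ H.edgeSet := by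
      intro e hce
      have h1 : e ∈ (H ⊔ edge u v).edgeSet := c.edges_subset_edgeSet hce
      rw [edgeSet_sup] at h1
      rcases h1 with h | h
      · exact h
      · exfalso
        apply he
        have : e ∈ ({s(u,v)} : Set (Sym2 α)) := by
          have := (edgeSet_fromEdgeSet ({s(u,v)} : Set (Sym2 α))) ▸ h
          exact this.1
        rwa [Set.mem_singleton_iff.mp this] at hce
    exact hH (c.transfer H hsub) (hc.transfer hsub)

lemma acyclic_edge_bound {α : Type*} [Fintype α] [Nonempty α] {G : SimpleGraph α}
    (hG : G.IsAcyclic) : G.edgeSet.ncard + 1 ≤ Fintype.card α := by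
  classical
  have hfin : Finite (SimpleGraph α) :=
    Finite.of_injective (fun G => G.Adj) (fun G G' h => by ext a b; exact iff_of_eq (congrFun (congrFun h a) b))
  obtain ⟨H, ⟨hGH, hH⟩, hmax⟩ :=
    Set.Finite.exists_maximalFor id _ (Set.toFinite {H : SimpleGraph α | G ≤ H ∧ H.IsAcyclic})
      ⟨G, le_refl G, hG⟩
  have hpre : H.Preconnected := by
    intro u v
    by_contra hr
    have hne : u ≠ v := fun h => hr (h ▸ Reachable.refl u)
    have hadj : ¬H.Adj u v := fun h => hr h.reachable
    have hmem : H ⊔ edge u v ∈ {H : SimpleGraph α | G ≤ H ∧ H.IsAcyclic} :=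
      ⟨le_trans hGH le_sup_left, acyclic_sup_edge hH hr⟩
    have : id H = id (H ⊔ edge u v) := le_antisymm le_sup_left (hmax hmem le_sup_left)
    simp only [id] at this
    apply hadj
    rw [this]
    exact Or.inr ((edge_adj u v u v).mpr ⟨Or.inl ⟨rfl, rfl⟩, hne⟩)
  have htree : H.IsTree := ⟨⟨hpre⟩, hH⟩
  have hcard := htree.card_edgeFinset
  have hsub : G.edgeSet ⊆ H.edgeSet := edgeSet_mono hGH
  calc G.edgeSet.ncard + 1 ≤ H.edgeSet.ncard + 1 := by
        have := Set.ncard_le_ncard hsub H.edgeSet.toFinite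
        omega
    _ = H.edgeFinset.card + 1 := by rw [← coe_edgeFinset, Set.ncard_coe_finset]
    _ = Fintype.card α := hcard

/-- In a connected cubic graph on `n` vertices, any decycling set `J`
(removal leaves an acyclic graph) satisfies `|J| ≥ ⌈(n+2)/4⌉`. -/
theorem stmt1 {V : Type*} [Fintype V] [DecidableEq V] (G : SimpleGraph V)
    [DecidableRel G.Adj] (hconn : G.Connected) (hcubic : ∀ v, G.degree v = 3)
    (J : Finset V) (hJ : (G.induce ((↑J : Set V)ᶜ)).IsAcyclic) :
    ⌈((Fintype.card V : ℚ) + 2) / 4⌉ ≤ (J.card : ℤ) := by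
  classical
  have hne : Nonempty V := hconn.nonempty
  set n := Fintype.card V with hn
  set S : Set V := (↑J : Set V)ᶜ with hS
  -- key inequality in ℕ : n + 2 ≤ 4 * J.card
  have key : n + 2 ≤ 4 * J.card := by
    set d1 : V → ℕ := fun v => (J.filter (fun u => G.Adj v u)).card with hd1
    set d2 : V → ℕ := fun v => (Jᶜ.filter (fun u => G.Adj v u)).card with hd2
    have hsplit : ∀ v, d1 v + d2 v = 3 := by
      intro v
      rw [hd1, hd2]
      rw [← card_union_of_disjoint]
      · rw [← filter_union, union_compl, ← neighborFinset_eq_filter]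
        exact hcubic v
      · exact disjoint_filter_filter (disjoint_compl_right)
    -- degree in induced graph
    have hdeg : ∀ v : ↥S, (G.induce S).degree v = d2 ↑v := by
      intro v
      rw [degree, hd2]
      refine card_bij' (fun (w : ↥S) _ => (w : V))
        (fun w hw => (⟨w, by simp only [mem_filter, mem_compl] at hw; simp only [hS, Set.mem_compl_iff, Finset.mem_coe]; exact hw.1⟩ : ↥S))
        ?_ ?_ ?_ ?_
      case refine_1 =>
        intro a ha
        simp only [mem_neighborFinset, comap_adj, Function.Embedding.coe_subtype] at ha
        have h2 : (a : V) ∈ S := a.2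
        simp only [mem_filter, mem_compl]
        simp only [hS, Set.mem_compl_iff, Finset.mem_coe] at h2
        exact ⟨h2, ha⟩
      case refine_2 =>
        intro a ha
        simp only [mem_neighborFinset, comap_adj, Function.Embedding.coe_subtype]
        simp only [mem_filter] at ha
        exact ha.2
      case refine_3 => intro a ha; rfl
      case refine_4 => intro a ha; rfl
    -- sum over S of d2 equals twice edge count of induced forest
    have hmemS : ∀ x, x ∈ Jᶜ ↔ x ∈ S := by intro x; simp [hS]
    have hsum2 : ∑ v ∈ Jᶜ, d2 v = 2 * (G.induce S).edgeFinset.card := by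
      rw [sum_subtype Jᶜ hmemS (fun v => d2 v)]
      rw [← sum_degrees_eq_twice_card_edges]
      exact Finset.sum_congr rfl fun v _ => (hdeg v).symm
    -- forest bound
    have hcardS : Fintype.card ↥S = Jᶜ.card := by
      rw [Fintype.card_subtype]
      congr 1
      ext x
      simp [hS]
    -- double counting
    have hcross : ∑ v ∈ Jᶜ, d1 v = ∑ u ∈ J, d2 u := by
      simp only [hd1, hd2, card_filter]
      rw [Finset.sum_comm]
      apply Finset.sum_congr rfl
      intro u hu
      apply Finset.sum_congr rfl
      intro v hv
      simp [G.adj_comm]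
    have hd2le : ∀ u, d2 u ≤ 3 := by
      intro u
      rw [hd2, ← hcubic u, degree, neighborFinset_eq_filter]
      exact card_le_card (filter_subset_filter _ (subset_univ _))
    have hcrossle : ∑ v ∈ Jᶜ, d1 v ≤ 3 * J.card := by
      rw [hcross]
      calc ∑ u ∈ J, d2 u ≤ ∑ u ∈ J, 3 := Finset.sum_le_sum fun u _ => hd2le u
        _ = 3 * J.card := by rw [Finset.sum_const, smul_eq_mul, mul_comm]
    have htot : 3 * Jᶜ.card = ∑ v ∈ Jᶜ, d1 v + ∑ v ∈ Jᶜ, d2 v := by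
      rw [← Finset.sum_add_distrib]
      calc 3 * Jᶜ.card = ∑ _v ∈ Jᶜ, 3 := by rw [Finset.sum_const, smul_eq_mul, mul_comm]
        _ = _ := Finset.sum_congr rfl fun v _ => (hsplit v).symm
    have hcompl : Jᶜ.card + J.card = n := by
      rw [hn, card_compl]
      have := card_le_univ J
      omega
    by_cases hF : Jᶜ.card = 0
    · -- S empty, J = everything
      have hn1 : 1 ≤ n := Fintype.card_pos
      omega
    · have : Nonempty ↥S := by
        rw [← Fintype.card_pos_iff, hcardS]
        omega
      have hforest := acyclic_edge_bound hJ
      have hedge : (G.induce S).edgeSet.ncard = (G.induce S).edgeFinset.card := by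
        rw [← coe_edgeFinset, Set.ncard_coe_finset]
      rw [hedge, hcardS] at hforest
      omega
  -- conclude
  rw [Int.ceil_le]
  push_cast
  rw [div_le_iff₀ (by norm_num : (0:ℚ) < 4)]
  have : ((n : ℚ) + 2) ≤ 4 * J.card := by exact_mod_cast key
  linarith
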